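/- Let M be a matroid on Fin m whose ground set is all of Fin m, and let rk_M(S) denote the rank of S in M (the maximum cardinality of an independent subset of S). Then for every S : Finset (Fin m), the discrete Hessian matrix H^{rk_M}_S is negative semi-definite: for every y : Fin m → ℝ, ∑_{i : Fin m} ∑_{j : Fin m} y i · y j · H^{rk_M}_S(i,j) ≤ 0. -/

import Mathlib

open Finset

open Classical in
/-- The rank of the finite set `S` in the matroid `M`: the maximum cardinality
of an independent subset of `S`. -/
noncomputable def matFinRank {m : ℕ} (M : Matroid (Fin m)) (S : Finset (Fin m)) : ℕ :=
  (S.powerset.filter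
    (fun I : Finset (Fin m) => M.Indep (↑I : Set (Fin m)))).sup Finset.card

/-- The discrete Hessian matrix of the set function `v` at the set `S`. -/
def dHess {m : ℕ} (v : Finset (Fin m) → ℝ) (S : Finset (Fin m)) (i j : Fin m) : ℝ :=
  v (S ∪ {i, j}) - v (S ∪ {i}) - v (S ∪ {j}) + v S

section Aux

variable {m : ℕ} {M : Matroid (Fin m)}

lemma card_le_matFinRank {I T : Finset (Fin m)} (hI : M.Indep (↑I : Set (Fin m)))
    (hIT : I ⊆ T) : I.card ≤ matFinRank M T := by
  classical
  unfold matFinRank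
  apply Finset.le_sup
  simp only [Finset.mem_filter, Finset.mem_powerset]
  exact ⟨hIT, hI⟩

lemma exists_matFinRank_basis (M : Matroid (Fin m)) (T : Finset (Fin m)) :
    ∃ I, I ⊆ T ∧ M.Indep (↑I : Set (Fin m)) ∧ I.card = matFinRank M T := by
  classical
  have hne : (T.powerset.filter
      (fun I : Finset (Fin m) => M.Indep (↑I : Set (Fin m)))).Nonempty := by
    refine ⟨∅, ?_⟩
    simp only [Finset.mem_filter, Finset.mem_powerset]
    exact ⟨Finset.empty_subset _, by simpa using M.empty_indep⟩
  obtain ⟨I, hImem, hEq⟩ := Finset.exists_mem_eq_sup _ hne Finset.card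
  simp only [Finset.mem_filter, Finset.mem_powerset] at hImem
  exact ⟨I, hImem.1, hImem.2, by rw [matFinRank]; exact hEq.symm⟩

lemma matFinRank_mono {T T' : Finset (Fin m)} (h : T ⊆ T') :
    matFinRank M T ≤ matFinRank M T' := by
  obtain ⟨I, hIT, hInd, hcard⟩ := exists_matFinRank_basis M T
  rw [← hcard]
  exact card_le_matFinRank hInd (hIT.trans h)

lemma exists_matFinRank_extend {T : Finset (Fin m)} :
    ∀ k (I : Finset (Fin m)), M.Indep (↑I : Set (Fin m)) → I ⊆ T →
      matFinRank M T - I.card ≤ k →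
      ∃ J, I ⊆ J ∧ J ⊆ T ∧ M.Indep (↑J : Set (Fin m)) ∧ J.card = matFinRank M T := by
  intro k
  induction k with
  | zero =>
    intro I hI hIT hk
    have h1 : I.card ≤ matFinRank M T := card_le_matFinRank hI hIT
    exact ⟨I, Finset.Subset.refl I, hIT, hI, by omega⟩
  | succ k ih =>
    intro I hI hIT hk
    by_cases hcard : I.card = matFinRank M T
    · exact ⟨I, Finset.Subset.refl I, hIT, hI, hcard⟩
    · have h1 : I.card < matFinRank M T :=
        lt_of_le_of_ne (card_le_matFinRank hI hIT) hcard
      obtain ⟨B, hBT, hBind, hBcard⟩ := exists_matFinRank_basis M T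
      have hlt : (↑I : Set (Fin m)).encard < (↑B : Set (Fin m)).encard := by
        rw [Set.encard_coe_eq_coe_finsetCard, Set.encard_coe_eq_coe_finsetCard]
        exact_mod_cast hBcard ▸ h1
      obtain ⟨e, he, hins⟩ := hI.augment hBind hlt
      have heI : e ∉ I := by
        simpa using he.2
      have heB : e ∈ B := by simpa using he.1
      have hins' : M.Indep (↑(insert e I) : Set (Fin m)) := by
        rw [Finset.coe_insert]; exact hins
      have hsub : insert e I ⊆ T := Finset.insert_subset (hBT heB) hIT
      have hcard' : matFinRank M T - (insert e I).card ≤ k := by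
        rw [Finset.card_insert_of_notMem heI]; omega
      obtain ⟨J, hJ1, hJ2, hJ3, hJ4⟩ := ih (insert e I) hins' hsub hcard'
      exact ⟨J, (Finset.subset_insert e I).trans hJ1, hJ2, hJ3, hJ4⟩

lemma matFinRank_submod (M : Matroid (Fin m)) (A B : Finset (Fin m)) :
    matFinRank M (A ∪ B) + matFinRank M (A ∩ B) ≤ matFinRank M A + matFinRank M B := by
  obtain ⟨I, hIsub, hIind, hIcard⟩ := exists_matFinRank_basis M (A ∩ B)
  obtain ⟨J, hIJ, hJsub, hJind, hJcard⟩ :=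
    exists_matFinRank_extend (matFinRank M (A ∪ B)) I hIind
      (hIsub.trans Finset.inter_subset_union) (by omega)
  have hJIinter : J ∩ (A ∩ B) = I := by
    refine (Finset.eq_of_subset_of_card_le ?_ ?_).symm
    · exact Finset.subset_inter hIJ hIsub
    · rw [hIcard]
      exact card_le_matFinRank (hJind.subset (by simp)) Finset.inter_subset_right
  have h1 : (J ∩ A).card ≤ matFinRank M A :=
    card_le_matFinRank (hJind.subset (by simp)) Finset.inter_subset_right
  have h2 : (J ∩ B).card ≤ matFinRank M B :=
    card_le_matFinRank (hJind.subset (by simp)) Finset.inter_subset_right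
  have hunion : (J ∩ A) ∪ (J ∩ B) = J := by
    rw [← Finset.inter_union_distrib_left]
    exact Finset.inter_eq_left.mpr hJsub
  have hinter : (J ∩ A) ∩ (J ∩ B) = I := by
    rw [← hJIinter]
    ext x; simp; tauto
  have := Finset.card_union_add_card_inter (J ∩ A) (J ∩ B)
  rw [hunion, hinter, hJcard, hIcard] at this
  omega

lemma matFinRank_singleton_le (M : Matroid (Fin m)) (x : Fin m) :
    matFinRank M {x} ≤ 1 := by
  classical
  unfold matFinRank
  apply Finset.sup_le
  intro I hI
  simp only [Finset.mem_filter, Finset.mem_powerset] at hI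
  calc I.card ≤ ({x} : Finset (Fin m)).card := Finset.card_le_card hI.1
    _ = 1 := Finset.card_singleton x

lemma matFinRank_union_singleton_le (M : Matroid (Fin m)) (T : Finset (Fin m)) (x : Fin m) :
    matFinRank M (T ∪ {x}) ≤ matFinRank M T + 1 := by
  have h := matFinRank_submod M T {x}
  have h2 := matFinRank_singleton_le M x
  omega

lemma finset_union_pair_eq {α : Type*} [DecidableEq α] (S : Finset α) (i j : α) :
    (S ∪ {i}) ∪ (S ∪ {j}) = S ∪ {i, j} := by
  ext x; simp; tauto

lemma finset_inter_singletons_eq {α : Type*} [DecidableEq α] (S : Finset α) {i j : α}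
    (hij : i ≠ j) : (S ∪ {i}) ∩ (S ∪ {j}) = S := by
  ext x
  simp only [Finset.mem_inter, Finset.mem_union, Finset.mem_singleton]
  constructor
  · rintro ⟨hx1 | rfl, hx2 | h2⟩ <;> first | assumption | (exact absurd h2 hij) | tauto
  · tauto

lemma finset_inter_pairs_eq {α : Type*} [DecidableEq α] (S : Finset α) {i j k : α}
    (hik : i ≠ k) : (S ∪ {i, j}) ∩ (S ∪ {j, k}) = S ∪ {j} := by
  ext x
  simp only [Finset.mem_inter, Finset.mem_union, Finset.mem_insert, Finset.mem_singleton]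
  constructor
  · rintro ⟨hx1 | hx1 | rfl, hx2 | hx2 | h2⟩ <;>
      first | (left; assumption) | (right; rfl) | (exact absurd (hx1.trans h2.symm) hik) | (exact absurd (hx1.symm.trans h2) hik) | tauto
  · tauto

lemma finset_pair_subset_union {α : Type*} [DecidableEq α] (S : Finset α) (i j k : α) :
    S ∪ {i, k} ⊆ (S ∪ {i, j}) ∪ (S ∪ {j, k}) := by
  intro x hx
  simp only [Finset.mem_union, Finset.mem_insert, Finset.mem_singleton] at hx ⊢
  tauto

end Aux

set_option maxHeartbeats 2000000 in
theorem stmt7 (m : ℕ) (M : Matroid (Fin m)) (hM : M.E = Set.univ)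
    (S : Finset (Fin m)) (y : Fin m → ℝ) :
    ∑ i : Fin m, ∑ j : Fin m,
      y i * y j * dHess (fun T => (matFinRank M T : ℝ)) S i j ≤ 0 := by
  classical
  set rS : ℕ := matFinRank M S with hrS
  set f : Fin m → ℕ := fun i => matFinRank M (S ∪ {i}) with hf
  set g : Fin m → Fin m → ℕ := fun i j => matFinRank M (S ∪ {i, j}) with hg
  -- basic facts
  have hfl : ∀ i, rS ≤ f i := fun i => matFinRank_mono Finset.subset_union_left
  have hfu : ∀ i, f i ≤ rS + 1 := fun i => matFinRank_union_singleton_le M S i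
  have hgsymm : ∀ i j, g i j = g j i := by
    intro i j; simp only [hg, Finset.pair_comm i j]
  have hgd : ∀ i, g i i = f i := by
    intro i; simp [hg, hf, Finset.pair_eq_singleton]
  have hgl : ∀ i j, f i ≤ g i j := by
    intro i j
    apply matFinRank_mono
    apply Finset.union_subset_union_right
    simp
  have hglr : ∀ i j, f j ≤ g i j := fun i j => (hgsymm i j) ▸ hgl j i
  -- submodular instance for distinct i j
  have hsub : ∀ i j, i ≠ j → g i j + rS ≤ f i + f j := by
    intro i j hij
    have h := matFinRank_submod M (S ∪ {i}) (S ∪ {j})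
    rw [finset_union_pair_eq S i j, finset_inter_singletons_eq S hij] at h
    exact h
  -- the parallel relation
  set Rel : Fin m → Fin m → Prop :=
    fun i j => f i = rS + 1 ∧ f j = rS + 1 ∧ g i j = rS + 1 with hRel
  have hRsymm : ∀ i j, Rel i j → Rel j i := by
    rintro i j ⟨h1, h2, h3⟩
    exact ⟨h2, h1, (hgsymm j i) ▸ h3⟩
  have hRrefl : ∀ i, f i = rS + 1 → Rel i i := by
    intro i hi
    exact ⟨hi, hi, (hgd i) ▸ hi⟩
  have hRtrans : ∀ i j k, Rel i j → Rel j k → Rel i k := by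
    rintro i j k ⟨hfi, hfj, hgij⟩ ⟨_, hfk, hgjk⟩
    by_cases hik : i = k
    · subst hik; exact hRrefl i hfi
    refine ⟨hfi, hfk, ?_⟩
    have h := matFinRank_submod M (S ∪ {i, j}) (S ∪ {j, k})
    rw [finset_inter_pairs_eq S hik] at h
    have hik' : S ∪ {i, k} ⊆ (S ∪ {i, j}) ∪ (S ∪ {j, k}) :=
      finset_pair_subset_union S i j k
    have h2 : matFinRank M (S ∪ {i, k}) ≤ matFinRank M ((S ∪ {i, j}) ∪ (S ∪ {j, k})) :=
      matFinRank_mono hik'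
    have h3 : matFinRank M (S ∪ {j}) = rS + 1 := hfj
    have h4 : matFinRank M (S ∪ {i, j}) = rS + 1 := hgij
    have h5 : matFinRank M (S ∪ {j, k}) = rS + 1 := hgjk
    have h6 : rS + 1 ≤ matFinRank M (S ∪ {i, k}) := (hfi ▸ hgl i k)
    show matFinRank M (S ∪ {i, k}) = rS + 1
    omega
  -- entry formula
  have entry : ∀ i j, (g i j : ℝ) - (f i : ℝ) - (f j : ℝ) + (rS : ℝ) =
      if Rel i j then (-1 : ℝ) else 0 := by
    intro i j
    by_cases hij : i = j
    · subst hij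
      by_cases hfi : f i = rS + 1
      · rw [if_pos (hRrefl i hfi)]
        rw [hgd i, hfi]; push_cast; ring
      · have hfi' : f i = rS := by have := hfl i; have := hfu i; omega
        rw [if_neg (by rintro ⟨h1, -, -⟩; exact hfi h1)]
        rw [hgd i, hfi']; push_cast; ring
    · have hs := hsub i j hij
      by_cases hfi : f i = rS + 1
      · by_cases hfj : f j = rS + 1
        · by_cases hgij : g i j = rS + 1
          · rw [if_pos ⟨hfi, hfj, hgij⟩, hgij, hfi, hfj]; push_cast; ring
          · have : g i j = rS + 2 := by
              have := hgl i j; have := hglr i j; omega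
            rw [if_neg (by rintro ⟨-, -, h3⟩; exact hgij h3), this, hfi, hfj]
            push_cast; ring
        · have hfj' : f j = rS := by have := hfl j; have := hfu j; omega
          have : g i j = f i := by have := hgl i j; omega
          rw [if_neg (by rintro ⟨-, h2, -⟩; exact hfj h2), this, hfj']
          push_cast; ring
      · have hfi' : f i = rS := by have := hfl i; have := hfu i; omega
        have : g i j = f j := by have := hglr i j; omega
        rw [if_neg (by rintro ⟨h1, -, -⟩; exact hfi h1), this, hfi']
        push_cast; ring
  -- rewrite the summand
  have hsummand : ∀ i j, y i * y j * dHess (fun T => (matFinRank M T : ℝ)) S i j =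
      if Rel i j then -(y i * y j) else 0 := by
    intro i j
    have : dHess (fun T => (matFinRank M T : ℝ)) S i j =
        (g i j : ℝ) - (f i : ℝ) - (f j : ℝ) + (rS : ℝ) := rfl
    rw [this, entry i j]
    by_cases h : Rel i j <;> simp [h] <;> ring
  simp only [hsummand]
  -- group into classes
  set U : Finset (Fin m) := Finset.univ.filter (fun i => f i = rS + 1) with hU
  set c : Fin m → Finset (Fin m) := fun i => Finset.univ.filter (Rel i) with hc
  have hmemc : ∀ i j, j ∈ c i ↔ Rel i j := by
    intro i j; simp [hc]
  have hinner : ∀ i, (∑ j : Fin m, if Rel i j then -(y i * y j) else 0) =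
      -(y i * ∑ j ∈ c i, y j) := by
    intro i
    have h1 : ∀ j, (if Rel i j then -(y i * y j) else 0)
        = -(if j ∈ c i then y i * y j else 0) := by
      intro j
      by_cases h : Rel i j
      · rw [if_pos h, if_pos ((hmemc i j).mpr h)]
      · rw [if_neg h, if_neg (fun hj => h ((hmemc i j).mp hj)), neg_zero]
    calc ∑ j : Fin m, (if Rel i j then -(y i * y j) else 0)
        = ∑ j : Fin m, -(if j ∈ c i then y i * y j else 0) :=
          Finset.sum_congr rfl (fun j _ => h1 j)
      _ = -∑ j : Fin m, (if j ∈ c i then y i * y j else 0) := by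
          rw [Finset.sum_neg_distrib]
      _ = -∑ j ∈ Finset.univ ∩ c i, y i * y j := by rw [Finset.sum_ite_mem]
      _ = -(y i * ∑ j ∈ c i, y j) := by rw [Finset.univ_inter, Finset.mul_sum]
  have hstep : ∑ i : Fin m, ∑ j : Fin m, (if Rel i j then -(y i * y j) else 0)
      = -∑ i : Fin m, y i * ∑ j ∈ c i, y j := by
    rw [← Finset.sum_neg_distrib]
    exact Finset.sum_congr rfl (fun i _ => hinner i)
  rw [hstep, neg_nonpos]
  -- restrict to U
  have hrestrict : ∑ i : Fin m, y i * ∑ j ∈ c i, y j = ∑ i ∈ U, y i * ∑ j ∈ c i, y j := by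
    rw [← Finset.sum_filter_add_sum_filter_not Finset.univ (fun i => f i = rS + 1)]
    have : ∑ i ∈ Finset.univ.filter (fun i => ¬ f i = rS + 1), y i * ∑ j ∈ c i, y j = 0 := by
      apply Finset.sum_eq_zero
      intro i hi
      simp only [Finset.mem_filter] at hi
      have : c i = ∅ := by
        rw [Finset.eq_empty_iff_forall_notMem]
        intro j hj
        rw [hmemc] at hj
        exact hi.2 hj.1
      rw [this]; simp
    rw [this, add_zero]
  rw [hrestrict]
  -- fiberwise over classes
  have hfiber := Finset.sum_fiberwise_of_maps_to (g := c) (t := U.image c)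
    (fun i hi => Finset.mem_image_of_mem c hi) (fun i => y i * ∑ j ∈ c i, y j)
  rw [← hfiber]
  apply Finset.sum_nonneg
  intro C hC
  obtain ⟨i0, hi0U, hi0⟩ := Finset.mem_image.mp hC
  have hi0U' : f i0 = rS + 1 := by
    simp only [hU, Finset.mem_filter] at hi0U; exact hi0U.2
  have hclass : U.filter (fun i => c i = C) = C := by
    subst hi0
    ext j
    simp only [Finset.mem_filter, hU, Finset.mem_univ, true_and, hmemc]
    constructor
    · rintro ⟨hjU, hcj⟩
      have hjj : j ∈ c j := (hmemc j j).mpr (hRrefl j hjU)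
      rw [hcj] at hjj
      exact (hmemc i0 j).mp hjj
    · intro hj
      have hj' : Rel i0 j := hj
      refine ⟨hj'.2.1, ?_⟩
      ext k
      rw [hmemc, hmemc]
      constructor
      · intro hk; exact hRtrans i0 j k hj' hk
      · intro hk; exact hRtrans j i0 k (hRsymm i0 j hj') hk
  rw [hclass]
  have : ∀ j ∈ C, c j = C := by
    intro j hj
    have := hclass ▸ hj
    rw [Finset.mem_filter] at this
    exact this.2
  rw [Finset.sum_congr rfl (fun j hj => by rw [this j hj])]
  rw [← Finset.sum_mul]
  exact mul_self_nonneg _
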